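/- There exists a natural number k₀ such that for all k ≥ k₀, there exists a tournament on k²·2^k vertices that is k-dominated. -/

import Mathlib

/-- A tournament on Fin n: the relation is asymmetric and total on distinct pairs. -/
def IsTournament {n : ℕ} (r : Fin n → Fin n → Prop) : Prop :=
  (∀ u v : Fin n, r u v → ¬ r v u) ∧ (∀ u v : Fin n, u ≠ v → r u v ∨ r v u)

/-- An m-star: an m-element vertex set with a center dominating all other members. -/
def IsMStar {n : ℕ} (r : Fin n → Fin n → Prop) (m : ℕ) (S : Finset (Fin n)) : Prop :=
  S.card = m ∧ ∃ c ∈ S, ∀ v ∈ S, v ≠ c → r c v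

/-- An m-star-factor: a partition of the vertex set into pairwise disjoint m-stars. -/
def HasStarFactor {n : ℕ} (r : Fin n → Fin n → Prop) (m : ℕ) : Prop :=
  ∃ P : Finset (Finset (Fin n)), (∀ S ∈ P, IsMStar r m S) ∧
    (P : Set (Finset (Fin n))).PairwiseDisjoint id ∧ P.biUnion id = Finset.univ

/-- k-dominated: every k-set of vertices has an outside vertex dominating all of it. -/
def KDominated {n : ℕ} (r : Fin n → Fin n → Prop) (k : ℕ) : Prop :=
  ∀ U : Finset (Fin n), U.card = k → ∃ v, v ∉ U ∧ ∀ u ∈ U, r v u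



lemma two_choose (m : ℕ) : 2 * Nat.choose m 2 = m * (m - 1) := by
  induction m with
  | zero => simp
  | succ j ih =>
    have h : (j+1).choose 2 = j.choose 1 + j.choose 2 := Nat.choose_succ_succ j 1
    rw [h, Nat.choose_one_right, Nat.mul_add, ih, Nat.succ_sub_one]
    cases j with
    | zero => simp
    | succ i => rw [Nat.succ_sub_one]; ring

lemma three_term (x N : ℕ) (hN : 2 ≤ N) :
    x^N + N * x^(N-1) + N.choose 2 * x^(N-2) ≤ (x+1)^N := by
  have h := add_pow x 1 N
  have hsub : ({N-2, N-1, N} : Finset ℕ) ⊆ Finset.range (N+1) := by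
    intro a ha; simp only [Finset.mem_insert, Finset.mem_singleton] at ha
    rw [Finset.mem_range]; omega
  have hle : ∑ m ∈ ({N-2, N-1, N} : Finset ℕ), x ^ m * 1 ^ (N - m) * (N.choose m)
      ≤ ∑ m ∈ Finset.range (N+1), x ^ m * 1 ^ (N - m) * (N.choose m) :=
    Finset.sum_le_sum_of_subset hsub
  have h1 : (N-2) ∉ ({N-1, N} : Finset ℕ) := by simp; omega
  have h2 : (N-1) ∉ ({N} : Finset ℕ) := by simp; omega
  rw [Finset.sum_insert h1, Finset.sum_insert h2, Finset.sum_singleton] at hle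
  have c1 : N.choose (N-1) = N := by
    rw [show N - 1 = N - 1 from rfl, Nat.choose_symm (by omega : 1 ≤ N), Nat.choose_one_right]
  have c2 : N.choose (N-2) = N.choose 2 := Nat.choose_symm (by omega : 2 ≤ N)
  simp only [one_pow, mul_one, Nat.choose_self, c1, c2] at hle
  calc x^N + N * x^(N-1) + N.choose 2 * x^(N-2)
      = x ^ (N-2) * N.choose 2 + (x ^ (N-1) * N + x ^ N * 1) := by ring
    _ ≤ ∑ m ∈ Finset.range (N+1), x ^ m * 1 ^ (N - m) * (N.choose m) := by
        simpa using hle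
    _ = (x+1)^N := h.symm

lemma five_mul_le (m : ℕ) (hm : 2 ≤ m) : 5 * (m-1)^m ≤ 2 * m^m := by
  have h := three_term (m-1) m hm
  rw [show m - 1 + 1 = m by omega] at h
  have e1 : (m-1) * (m-1)^(m-2) = (m-1)^(m-1) := by
    rw [← pow_succ']; congr 1; omega
  have e2 : (m-1) * (m-1)^(m-1) = (m-1)^m := by
    rw [← pow_succ']; congr 1; omega
  have k1 : (m-1)^m ≤ m * (m-1)^(m-1) := by
    calc (m-1)^m = (m-1) * (m-1)^(m-1) := e2.symm
      _ ≤ m * (m-1)^(m-1) := Nat.mul_le_mul_right _ (by omega)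
  have k2 : 2 * ((m).choose 2 * (m-1)^(m-2)) = m * (m-1)^(m-1) := by
    rw [← mul_assoc, two_choose, mul_assoc, e1]
  nlinarith [h, k1, k2]



lemma lin_le_pow (L : ℕ) (hL : 7 ≤ L) : 8*(L+1) + 9 ≤ 2^L := by
  induction L, hL using Nat.le_induction with
  | base => norm_num
  | succ L hL ih =>
    have : (2:ℕ)^(L+1) = 2^L + 2^L := by ring
    have h8 : (8:ℕ) ≤ 2^L := le_trans (by omega) ih
    omega

lemma key2 (k : ℕ) (hk : 128 ≤ k) : k^(2*k) * 2^(2*k^2 - 1) < 5^(k^2 - 1) := by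
  have hk0 : k ≠ 0 := by omega
  set L := Nat.log 2 k with hLdef
  set t := k^2 with htdef
  set q := (t-1)/4 with hqdef
  have hL7 : 7 ≤ L := (Nat.le_log_iff_pow_le (by norm_num) hk0).mpr (by norm_num; omega)
  have h2L : 2^L ≤ k := Nat.pow_log_le_self 2 hk0
  have hkL : k < 2^(L+1) := Nat.lt_pow_succ_log_self (by norm_num) k
  have hlin : 8*(L+1) + 9 ≤ k := le_trans (lin_le_pow L hL7) h2L
  have htk : k*k = t := (sq k).symm
  have hqlb : 2*k*(L+1) + 8 ≤ q := by
    have h1 : k*(8*(L+1)+9) ≤ k*k := Nat.mul_le_mul_left k hlin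
    have h2 : k*(8*(L+1)+9) = 8*(k*(L+1)) + 9*k := by ring
    have h3 : 2*k*(L+1) = 2*(k*(L+1)) := by ring
    omega
  have hexp : 2*k*(L+1) + (2*t - 1) < 9*q := by omega
  calc k^(2*k) * 2^(2*t - 1)
      ≤ (2^(L+1))^(2*k) * 2^(2*t-1) :=
        Nat.mul_le_mul_right _ (Nat.pow_le_pow_left (le_of_lt hkL) _)
    _ = 2^((L+1)*(2*k) + (2*t-1)) := by rw [← pow_mul, ← pow_add]
    _ < 2^(9*q) := Nat.pow_lt_pow_right (by norm_num)
        (by have h9 : (L+1)*(2*k) = 2*k*(L+1) := by ring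
            omega)
    _ = 512^q := by rw [show (512:ℕ) = 2^9 by norm_num, ← pow_mul]
    _ ≤ 625^q := Nat.pow_le_pow_left (by norm_num) q
    _ = 5^(4*q) := by rw [show (625:ℕ) = 5^4 by norm_num, ← pow_mul]
    _ ≤ 5^(t-1) := Nat.pow_le_pow_right (by norm_num) (by omega)

lemma main_ineq (k : ℕ) (hk : 128 ≤ k) :
    (k^2*2^k)^k * (2^k - 1)^(k^2*2^k - k) < (2^k)^(k^2*2^k - k) := by
  set m := 2^k with hmdef
  set n := k^2*m with hndef
  have hm2 : 2 ≤ m := by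
    calc (2:ℕ) = 2^1 := rfl
    _ ≤ 2^k := Nat.pow_le_pow_right (by norm_num) (by omega)
  have hkm : k ≤ m := le_of_lt (Nat.lt_two_pow_self (n := k))
  have hdecomp : n - k = (k^2-1)*m + (m-k) := by
    have h1 : (k^2-1)*m = k^2*m - 1*m := Nat.sub_mul _ _ _
    have hmn : m ≤ k^2*m := Nat.le_mul_of_pos_left _ (Nat.pow_pos (n := 2) (by omega))
    omega
  set a := k^2 - 1 with hadef
  have h5 : 5^a * ((m-1)^m)^a ≤ 2^a * (m^m)^a := by
    rw [← mul_pow, ← mul_pow]; exact Nat.pow_le_pow_left (five_mul_le m hm2) a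
  have hY : 0 < (m^m)^a := by positivity
  have hkey : n^k * 2^a < 5^a := by
    have e : n^k * 2^a = k^(2*k) * 2^(2*k^2-1) := by
      calc n^k * 2^a = ((k^2)^k * (2^k)^k) * 2^a := by rw [hndef, hmdef, mul_pow]
        _ = k^(2*k) * (2^(k*k) * 2^a) := by rw [← pow_mul, ← pow_mul, mul_assoc]
        _ = k^(2*k) * 2^(k*k + a) := by rw [pow_add]
        _ = k^(2*k) * 2^(2*k^2 - 1) := by
            have h2 : k^2 = k*k := pow_two k
            have h1 : 1 ≤ k^2 := Nat.one_le_pow 2 k (by omega)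
            congr 2
            rw [hadef]
            omega
    rw [e]; exact key2 k hk
  have step1 : n^k * ((m-1)^m)^a < (m^m)^a := by
    have h2 : n^k * (5^a * ((m-1)^m)^a) ≤ n^k * (2^a * (m^m)^a) :=
      Nat.mul_le_mul_left _ h5
    have h4 : (n^k * 2^a) * (m^m)^a < 5^a * (m^m)^a :=
      (Nat.mul_lt_mul_right hY).mpr hkey
    have h6 : 5^a * (n^k * ((m-1)^m)^a) < 5^a * ((m^m)^a) := by
      calc 5^a * (n^k * ((m-1)^m)^a) = n^k * (5^a * ((m-1)^m)^a) := by ring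
        _ ≤ n^k * (2^a * (m^m)^a) := h2
        _ = (n^k * 2^a) * (m^m)^a := by ring
        _ < 5^a * (m^m)^a := h4
    exact Nat.lt_of_mul_lt_mul_left h6
  calc n^k * (m-1)^(n-k)
      = (n^k * ((m-1)^m)^a) * (m-1)^(m-k) := by
        rw [hdecomp, pow_add, pow_mul]; ring
    _ ≤ (n^k * ((m-1)^m)^a) * m^(m-k) :=
        Nat.mul_le_mul_left _ (Nat.pow_le_pow_left (by omega) _)
    _ < (m^m)^a * m^(m-k) := (Nat.mul_lt_mul_right (by positivity)).mpr step1
    _ = m^(n-k) := by rw [hdecomp, pow_add, pow_mul']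

def rel {n : ℕ} (g : Fin n → Fin n → Bool) (u v : Fin n) : Prop :=
  u ≠ v ∧ (if u < v then g u v = true else g v u = false)

lemma rel_tournament {n : ℕ} (g : Fin n → Fin n → Bool) : IsTournament (rel g) := by
  constructor
  · rintro u v ⟨hne, h1⟩ ⟨-, h2⟩
    rcases lt_or_gt_of_ne hne with h | h
    · rw [if_pos h] at h1
      rw [if_neg (asymm h), h1] at h2
      exact absurd h2 (by simp)
    · rw [if_neg (asymm h)] at h1
      rw [if_pos h, h1] at h2
      exact absurd h2 (by simp)
  · intro u v hne
    rcases lt_or_gt_of_ne hne with h | h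
    · rcases Bool.eq_false_or_eq_true (g u v) with hb | hb
      · exact Or.inl ⟨hne, by rw [if_pos h]; exact hb⟩
      · exact Or.inr ⟨hne.symm, by rw [if_neg (asymm h)]; exact hb⟩
    · rcases Bool.eq_false_or_eq_true (g v u) with hb | hb
      · exact Or.inr ⟨hne.symm, by rw [if_pos h]; exact hb⟩
      · exact Or.inl ⟨hne, by rw [if_neg (asymm h)]; exact hb⟩

instance relDecidable {n : ℕ} (g : Fin n → Fin n → Bool) (u v : Fin n) :
    Decidable (rel g u v) := by unfold rel; infer_instance

def Phi {n : ℕ} (U : Finset (Fin n)) (g : Fin n → Fin n → Bool)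
    (v : {v : Fin n // v ∉ U}) (u : {u : Fin n // u ∈ U}) : Bool :=
  if (v : Fin n) < (u : Fin n) then g v u else !(g u v)

lemma rel_iff_phi {n : ℕ} (U : Finset (Fin n)) (g : Fin n → Fin n → Bool)
    (v : {v : Fin n // v ∉ U}) (u : {u : Fin n // u ∈ U}) :
    rel g v u ↔ Phi U g v u = true := by
  have hne : (v : Fin n) ≠ (u : Fin n) := fun h => v.2 (h ▸ u.2)
  unfold rel Phi
  rcases lt_or_gt_of_ne hne with h | h
  · rw [if_pos h, if_pos h]
    simp [hne]
  · rw [if_neg (asymm h), if_neg (asymm h)]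
    simp [hne]

open Finset in
lemma badU_card {n : ℕ} (k : ℕ) (hkn : k ≤ n) (U : Finset (Fin n)) (hU : U.card = k) :
    (Finset.univ.filter (fun g : Fin n → Fin n → Bool =>
       ∀ v, v ∉ U → ∃ u ∈ U, ¬ rel g v u)).card
     ≤ (2^k - 1)^(n - k) * 2^(n*n - k*(n-k)) := by
  classical
  have hcardA : Fintype.card {v : Fin n // v ∉ U} = n - k := by
    rw [Fintype.card_subtype_compl, Fintype.card_fin, Fintype.card_coe, hU]
  have hcardB : Fintype.card {u : Fin n // u ∈ U} = k := by
    rw [Fintype.card_coe, hU]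
  set R : Finset (Fin n × Fin n) :=
    Finset.univ.filter (fun p => p.1 < p.2 ∧ ((p.1 ∈ U) ↔ (p.2 ∉ U))) with hRdef
  set G : (Fin n → Fin n → Bool) →
      ({v : Fin n // v ∉ U} → {u : Fin n // u ∈ U} → Bool) × ({p : Fin n × Fin n // p ∉ R} → Bool) :=
    fun g => (Phi U g, fun p => g p.1.1 p.1.2) with hGdef
  have hGinj : Function.Injective G := by
    intro g g' h
    have h1 : Phi U g = Phi U g' := congrArg Prod.fst h
    have h2 : (fun p : {p : Fin n × Fin n // p ∉ R} => g p.1.1 p.1.2) =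
        (fun p => g' p.1.1 p.1.2) := congrArg Prod.snd h
    funext x y
    by_cases hxy : (x, y) ∈ R
    · obtain ⟨hlt, hiff⟩ := (Finset.mem_filter.mp hxy).2
      by_cases hxU : x ∈ U
      · have hyU : y ∉ U := hiff.mp hxU
        have h3 := congrFun (congrFun h1 ⟨y, hyU⟩) ⟨x, hxU⟩
        unfold Phi at h3
        rw [if_neg (asymm hlt), if_neg (asymm hlt)] at h3
        simpa using h3
      · have hyU : y ∈ U := by
          by_contra hy; exact hxU (hiff.mpr hy)
        have h3 := congrFun (congrFun h1 ⟨x, hxU⟩) ⟨y, hyU⟩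
        unfold Phi at h3
        rwa [if_pos hlt, if_pos hlt] at h3
    · exact congrFun h2 ⟨(x, y), hxy⟩
  set S : Finset ({v : Fin n // v ∉ U} → {u : Fin n // u ∈ U} → Bool) :=
    Finset.univ.filter (fun h => ∀ v, ∃ u, h v u = false) with hSdef
  have hmaps : ∀ g ∈ Finset.univ.filter (fun g : Fin n → Fin n → Bool =>
      ∀ v, v ∉ U → ∃ u ∈ U, ¬ rel g v u), G g ∈ S ×ˢ Finset.univ := by
    intro g hg
    rw [Finset.mem_filter] at hg
    rw [Finset.mem_product]
    refine ⟨?_, Finset.mem_univ _⟩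
    rw [hSdef, Finset.mem_filter]
    refine ⟨Finset.mem_univ _, ?_⟩
    intro v
    obtain ⟨u, huU, hnr⟩ := hg.2 v.1 v.2
    refine ⟨⟨u, huU⟩, ?_⟩
    have := (rel_iff_phi U g v ⟨u, huU⟩).not.mp hnr
    simpa using this
  have hcount : (Finset.univ.filter (fun g : Fin n → Fin n → Bool =>
      ∀ v, v ∉ U → ∃ u ∈ U, ¬ rel g v u)).card ≤ S.card * 2^(n*n - R.card) := by
    calc (Finset.univ.filter (fun g : Fin n → Fin n → Bool =>
          ∀ v, v ∉ U → ∃ u ∈ U, ¬ rel g v u)).card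
        ≤ (S ×ˢ (Finset.univ : Finset ({p : Fin n × Fin n // p ∉ R} → Bool))).card :=
          Finset.card_le_card_of_injOn G hmaps (hGinj.injOn)
      _ = S.card * 2^(n*n - R.card) := by
          rw [Finset.card_product, Finset.card_univ, Fintype.card_fun,
            Fintype.card_subtype_compl, Fintype.card_prod, Fintype.card_fin,
            Fintype.card_coe, Fintype.card_bool]
  have hcardS : S.card = (2^k - 1)^(n - k) := by
    rw [hSdef, ← Fintype.card_subtype]
    rw [Fintype.card_congr (Equiv.subtypePiEquivPi
      (p := fun (v : {v : Fin n // v ∉ U}) (q : {u : Fin n // u ∈ U} → Bool) => ∃ u, q u = false))]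
    rw [Fintype.card_pi]
    have hone : ∀ v : {v : Fin n // v ∉ U},
        Fintype.card {q : {u : Fin n // u ∈ U} → Bool // ∃ u, q u = false} = 2^k - 1 := by
      intro v
      have hiff : ∀ q : {u : Fin n // u ∈ U} → Bool,
          (∃ u, q u = false) ↔ ¬ (q = fun _ => true) := by
        intro q
        rw [funext_iff]
        push_neg
        constructor
        · rintro ⟨u, hu⟩; exact ⟨u, by simp [hu]⟩
        · rintro ⟨u, hu⟩; exact ⟨u, by simpa using hu⟩
      rw [Fintype.card_congr (Equiv.subtypeEquivRight hiff),
        Fintype.card_subtype_compl, Fintype.card_subtype_eq, Fintype.card_fun,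
        Fintype.card_bool, hcardB]
    rw [Finset.prod_congr rfl (fun v _ => hone v), Finset.prod_const, Finset.card_univ, hcardA]
  have hRcard : k*(n-k) ≤ R.card := by
    set ψ : {v : Fin n // v ∉ U} × {u : Fin n // u ∈ U} → Fin n × Fin n :=
      fun p => if (p.1 : Fin n) < (p.2 : Fin n) then ((p.1 : Fin n), (p.2 : Fin n))
        else ((p.2 : Fin n), (p.1 : Fin n)) with hψdef
    have hmem : ∀ p ∈ (Finset.univ : Finset ({v : Fin n // v ∉ U} × {u : Fin n // u ∈ U})),
        ψ p ∈ R := by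
      rintro ⟨v, u⟩ -
      have hne : (v : Fin n) ≠ (u : Fin n) := fun h => v.2 (h ▸ u.2)
      rw [hRdef, Finset.mem_filter]
      refine ⟨Finset.mem_univ _, ?_⟩
      rcases lt_or_gt_of_ne hne with h | h
      · rw [hψdef]; simp only [if_pos h]
        exact ⟨h, by simp [v.2, u.2]⟩
      · rw [hψdef]; simp only [if_neg (asymm h)]
        exact ⟨h, by simp [v.2, u.2]⟩
    have hinj : Set.InjOn ψ (Finset.univ : Finset ({v : Fin n // v ∉ U} × {u : Fin n // u ∈ U})) := by
      rintro ⟨v, u⟩ - ⟨v', u'⟩ - h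
      rw [hψdef] at h
      simp only at h
      have hne : (v : Fin n) ≠ (u : Fin n) := fun hh => v.2 (hh ▸ u.2)
      have hne' : (v' : Fin n) ≠ (u' : Fin n) := fun hh => v'.2 (hh ▸ u'.2)
      rcases lt_or_gt_of_ne hne with h1 | h1 <;> rcases lt_or_gt_of_ne hne' with h2 | h2
      · rw [if_pos h1, if_pos h2] at h
        obtain ⟨ha, hb⟩ := Prod.mk.injEq .. ▸ h
        exact Prod.ext (Subtype.ext (by exact ha)) (Subtype.ext (by exact hb))
      · rw [if_pos h1, if_neg (asymm h2)] at h
        obtain ⟨ha, hb⟩ := Prod.mk.injEq .. ▸ h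
        exact absurd (ha ▸ u'.2) v.2
      · rw [if_neg (asymm h1), if_pos h2] at h
        obtain ⟨ha, hb⟩ := Prod.mk.injEq .. ▸ h
        exact absurd (ha.symm ▸ u.2) v'.2
      · rw [if_neg (asymm h1), if_neg (asymm h2)] at h
        obtain ⟨ha, hb⟩ := Prod.mk.injEq .. ▸ h
        exact Prod.ext (Subtype.ext (by exact hb)) (Subtype.ext (by exact ha))
    have := Finset.card_le_card_of_injOn ψ hmem hinj
    rwa [Finset.card_univ, Fintype.card_prod, hcardA, hcardB, Nat.mul_comm] at this
  calc (Finset.univ.filter (fun g : Fin n → Fin n → Bool =>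
        ∀ v, v ∉ U → ∃ u ∈ U, ¬ rel g v u)).card
      ≤ S.card * 2^(n*n - R.card) := hcount
    _ = (2^k - 1)^(n - k) * 2^(n*n - R.card) := by rw [hcardS]
    _ ≤ (2^k - 1)^(n - k) * 2^(n*n - k*(n-k)) := by
        exact Nat.mul_le_mul_left _ (Nat.pow_le_pow_right (by norm_num)
          (Nat.sub_le_sub_left hRcard _))

open Finset in
theorem exists_k_dominated_tournament :
    ∃ k₀ : ℕ, ∀ k : ℕ, k₀ ≤ k →
      ∃ r : Fin (k ^ 2 * 2 ^ k) → Fin (k ^ 2 * 2 ^ k) → Prop,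
        IsTournament r ∧ KDominated r k := by
  refine ⟨128, fun k hk => ?_⟩
  set n := k ^ 2 * 2 ^ k with hndef
  have hkn : k ≤ n := by
    have h1 : k ≤ k * k := Nat.le_mul_of_pos_left k (by omega)
    have h2 : k * k = k ^ 2 := (pow_two k).symm
    have h3 : k ^ 2 ≤ k ^ 2 * 2 ^ k :=
      Nat.le_mul_of_pos_right _ (Nat.pow_pos (n := k) (by norm_num))
    omega
  classical
  -- counting
  have hbad : (Finset.univ.filter (fun g : Fin n → Fin n → Bool =>
      ∃ U : Finset (Fin n), U.card = k ∧ ∀ v, v ∉ U → ∃ u ∈ U, ¬ rel g v u)).card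
      < (Finset.univ : Finset (Fin n → Fin n → Bool)).card := by
    have hsub : (Finset.univ.filter (fun g : Fin n → Fin n → Bool =>
        ∃ U : Finset (Fin n), U.card = k ∧ ∀ v, v ∉ U → ∃ u ∈ U, ¬ rel g v u))
        ⊆ (Finset.powersetCard k Finset.univ).biUnion
          (fun U => Finset.univ.filter (fun g : Fin n → Fin n → Bool =>
            ∀ v, v ∉ U → ∃ u ∈ U, ¬ rel g v u)) := by
      intro g hg
      rw [Finset.mem_filter] at hg
      obtain ⟨-, U, hU, hgU⟩ := hg
      rw [Finset.mem_biUnion]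
      exact ⟨U, Finset.mem_powersetCard_univ.mpr hU,
        Finset.mem_filter.mpr ⟨Finset.mem_univ _, hgU⟩⟩
    have hstep : ∀ U ∈ Finset.powersetCard k (Finset.univ : Finset (Fin n)),
        (Finset.univ.filter (fun g : Fin n → Fin n → Bool =>
          ∀ v, v ∉ U → ∃ u ∈ U, ¬ rel g v u)).card
        ≤ (2^k - 1)^(n - k) * 2^(n*n - k*(n-k)) := fun U hU =>
      badU_card k hkn U (Finset.mem_powersetCard_univ.mp hU)
    have hchain : (Finset.univ.filter (fun g : Fin n → Fin n → Bool =>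
        ∃ U : Finset (Fin n), U.card = k ∧ ∀ v, v ∉ U → ∃ u ∈ U, ¬ rel g v u)).card
        ≤ n.choose k * ((2^k - 1)^(n - k) * 2^(n*n - k*(n-k))) := by
      calc _ ≤ ((Finset.powersetCard k (Finset.univ : Finset (Fin n))).biUnion
            (fun U => Finset.univ.filter (fun g : Fin n → Fin n → Bool =>
              ∀ v, v ∉ U → ∃ u ∈ U, ¬ rel g v u))).card := Finset.card_le_card hsub
        _ ≤ ∑ U ∈ Finset.powersetCard k (Finset.univ : Finset (Fin n)),
            (Finset.univ.filter (fun g : Fin n → Fin n → Bool =>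
              ∀ v, v ∉ U → ∃ u ∈ U, ¬ rel g v u)).card := Finset.card_biUnion_le
        _ ≤ ∑ _U ∈ Finset.powersetCard k (Finset.univ : Finset (Fin n)),
            ((2^k - 1)^(n - k) * 2^(n*n - k*(n-k))) := Finset.sum_le_sum hstep
        _ = n.choose k * ((2^k - 1)^(n - k) * 2^(n*n - k*(n-k))) := by
            rw [Finset.sum_const, Finset.card_powersetCard, Finset.card_univ,
              Fintype.card_fin, smul_eq_mul]
    have hfin : n.choose k * ((2^k - 1)^(n - k) * 2^(n*n - k*(n-k))) < 2^(n*n) := by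
      have h1 : n.choose k * (2^k - 1)^(n - k) < 2^(k*(n-k)) := by
        calc n.choose k * (2^k - 1)^(n - k)
            ≤ n^k * (2^k - 1)^(n - k) :=
              Nat.mul_le_mul_right _ (Nat.choose_le_pow n k)
          _ < (2^k)^(n-k) := main_ineq k hk
          _ = 2^(k*(n-k)) := by rw [← pow_mul]
      have h2 : k*(n-k) ≤ n*n := Nat.mul_le_mul hkn (Nat.sub_le n k)
      calc n.choose k * ((2^k - 1)^(n - k) * 2^(n*n - k*(n-k)))
          = (n.choose k * (2^k - 1)^(n - k)) * 2^(n*n - k*(n-k)) := by ring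
        _ < 2^(k*(n-k)) * 2^(n*n - k*(n-k)) :=
            (Nat.mul_lt_mul_right (Nat.pow_pos (by norm_num))).mpr h1
        _ = 2^(n*n) := by rw [← pow_add]; congr 1; omega
    have hcardΩ : (Finset.univ : Finset (Fin n → Fin n → Bool)).card = 2^(n*n) := by
      rw [Finset.card_univ, Fintype.card_fun, Fintype.card_fun, Fintype.card_bool,
        Fintype.card_fin, ← pow_mul]
    omega
  have hex : ∃ g : Fin n → Fin n → Bool,
      ¬ ∃ U : Finset (Fin n), U.card = k ∧ ∀ v, v ∉ U → ∃ u ∈ U, ¬ rel g v u := by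
    by_contra hc
    push_neg at hc
    have : (Finset.univ.filter (fun g : Fin n → Fin n → Bool =>
        ∃ U : Finset (Fin n), U.card = k ∧ ∀ v, v ∉ U → ∃ u ∈ U, ¬ rel g v u))
        = Finset.univ := by
      apply Finset.filter_true_of_mem
      intro g _
      exact hc g
    rw [this] at hbad
    exact absurd hbad (lt_irrefl _)
  obtain ⟨g, hg⟩ := hex
  refine ⟨rel g, rel_tournament g, ?_⟩
  intro U hU
  by_contra hcon
  push_neg at hcon
  apply hg
  refine ⟨U, hU, fun v hv => ?_⟩
  obtain ⟨u, huU, hru⟩ := hcon v hv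
  exact ⟨u, huU, hru⟩
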